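/- If two polynomials with all positive coefficients have log-concave coefficient sequences, then so does their product. -/

import Mathlib

open Polynomial

section Aux
open Finset

private lemma key_tp2 (a : ℤ → ℝ) (d : ℤ)
    (hpos : ∀ n, 0 ≤ n → n ≤ d → 0 < a n)
    (hz : ∀ n : ℤ, n < 0 ∨ d < n → a n = 0)
    (hlc : ∀ n : ℤ, a (n - 1) * a (n + 1) ≤ a n ^ 2) :
    ∀ s t : ℤ, s ≤ t → a (s - 1) * a t ≤ a s * a (t - 1) := by
  have hnn : ∀ n, 0 ≤ a n := by
    intro n
    rcases lt_or_ge n 0 with h | h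
    · rw [hz n (Or.inl h)]
    · rcases le_or_gt n d with h2 | h2
      · exact (hpos n h h2).le
      · rw [hz n (Or.inr h2)]
  intro s
  refine Int.le_induction ?_ ?_
  · rw [mul_comm]
  · intro t ht IH
    have h1 : t + 1 - 1 = t := by ring
    rw [h1]
    rcases eq_or_lt_of_le (hnn t) with h0 | h0
    · have hd : t < 0 ∨ d < t := by
        by_contra hc
        push_neg at hc
        exact absurd h0.symm (hpos t hc.1 hc.2).ne'
      rcases hd with h | h
      · have : a (s - 1) = 0 := hz _ (Or.inl (by omega))
        rw [this, zero_mul]; exact mul_nonneg (hnn _) (hnn _)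
      · have : a (t + 1) = 0 := hz _ (Or.inr (by omega))
        rw [this, mul_zero]; exact mul_nonneg (hnn _) (hnn _)
    · nlinarith [mul_le_mul_of_nonneg_right IH (hnn (t+1)),
        mul_le_mul_of_nonneg_left (hlc t) (hnn s), hnn (s-1), hnn (t+1)]

private lemma binet2 (S : Finset ℤ) (f0 f1 g0 g1 : ℤ → ℝ)
    (h : ∀ s ∈ S, ∀ t ∈ S,
      0 ≤ (f0 s * f1 t - f0 t * f1 s) * (g0 s * g1 t - g0 t * g1 s)) :
    (∑ s ∈ S, f0 s * g1 s) * (∑ s ∈ S, f1 s * g0 s) ≤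
      (∑ s ∈ S, f0 s * g0 s) * (∑ s ∈ S, f1 s * g1 s) := by
  have key : 0 ≤ ∑ s ∈ S, ∑ t ∈ S,
      (f0 s * f1 t - f0 t * f1 s) * (g0 s * g1 t - g0 t * g1 s) :=
    Finset.sum_nonneg fun s hs => Finset.sum_nonneg fun t ht => h s hs t ht
  have expand : ∑ s ∈ S, ∑ t ∈ S,
      (f0 s * f1 t - f0 t * f1 s) * (g0 s * g1 t - g0 t * g1 s)
      = 2 * ((∑ s ∈ S, f0 s * g0 s) * (∑ s ∈ S, f1 s * g1 s)
        - (∑ s ∈ S, f0 s * g1 s) * (∑ s ∈ S, f1 s * g0 s)) := by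
    have h1 : ∀ s ∈ S, ∑ t ∈ S,
        (f0 s * f1 t - f0 t * f1 s) * (g0 s * g1 t - g0 t * g1 s)
        = f0 s * g0 s * (∑ t ∈ S, f1 t * g1 t)
          - f0 s * g1 s * (∑ t ∈ S, f1 t * g0 t)
          - f1 s * g0 s * (∑ t ∈ S, f0 t * g1 t)
          + f1 s * g1 s * (∑ t ∈ S, f0 t * g0 t) := by
      intro s _
      rw [Finset.mul_sum, Finset.mul_sum, Finset.mul_sum, Finset.mul_sum,
        ← Finset.sum_sub_distrib, ← Finset.sum_sub_distrib, ← Finset.sum_add_distrib]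
      exact Finset.sum_congr rfl fun t _ => by ring
    rw [Finset.sum_congr rfl h1]
    rw [Finset.sum_add_distrib, Finset.sum_sub_distrib, Finset.sum_sub_distrib,
      ← Finset.sum_mul, ← Finset.sum_mul, ← Finset.sum_mul, ← Finset.sum_mul]
    ring
  rw [expand] at key
  linarith

private lemma conv_lemma (p r : Polynomial ℝ) (a b : ℤ → ℝ)
    (ha : ∀ i : ℕ, a i = p.coeff i) (ha0 : ∀ n : ℤ, n < 0 → a n = 0)
    (hb : ∀ i : ℕ, b i = r.coeff i) (hb0 : ∀ n : ℤ, n < 0 → b n = 0)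
    (n : ℕ) (u N : ℤ) (hu : 0 ≤ u) (hN : (n : ℤ) + u ≤ N) :
    (p * r).coeff n = ∑ s ∈ Finset.Icc (0:ℤ) N, a (s - u) * b ((n : ℤ) + u - s) := by
  rw [Polynomial.coeff_mul, Finset.Nat.sum_antidiagonal_eq_sum_range_succ_mk]
  have hsub : Finset.Icc u ((n : ℤ) + u) ⊆ Finset.Icc 0 N := Finset.Icc_subset_Icc hu hN
  have hzero : ∀ s ∈ Finset.Icc (0:ℤ) N, s ∉ Finset.Icc u ((n : ℤ) + u) →
      a (s - u) * b ((n : ℤ) + u - s) = 0 := by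
    intro s hs hns
    simp only [Finset.mem_Icc] at hs hns
    rcases (by omega : s < u ∨ (n : ℤ) + u < s) with h | h
    · rw [ha0 _ (by omega), zero_mul]
    · rw [hb0 _ (by omega), mul_zero]
  rw [← Finset.sum_subset hsub hzero]
  refine Finset.sum_nbij' (fun i => (i : ℤ) + u) (fun s => (s - u).toNat)
      ?_ ?_ ?_ ?_ ?_
  · intro i hi
    simp only [Finset.mem_range] at hi
    simp only [Finset.mem_Icc]
    omega
  · intro s hs
    simp only [Finset.mem_Icc] at hs
    simp only [Finset.mem_range]
    omega
  · intro i hi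
    show ((i : ℤ) + u - u).toNat = i
    omega
  · intro s hs
    simp only [Finset.mem_Icc] at hs
    show ((s - u).toNat : ℤ) + u = s
    omega
  · intro i hi
    simp only [Finset.mem_range] at hi
    have e1 : (i : ℤ) + u - u = (i : ℤ) := by ring
    have e2 : (n : ℤ) + u - ((i : ℤ) + u) = ((n - i : ℕ) : ℤ) := by push_cast; omega
    simp only [e1, e2, ha, hb]
end Aux

/-- If two polynomials with all positive coefficients (up to their degrees) have
log-concave coefficient sequences, then so does their product. -/
theorem mul_log_concave (p r : Polynomial ℝ)
    (hp_pos : ∀ i ≤ p.natDegree, 0 < p.coeff i)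
    (hr_pos : ∀ i ≤ r.natDegree, 0 < r.coeff i)
    (hp_lc : ∀ i, 0 < i → i < p.natDegree →
      p.coeff (i - 1) * p.coeff (i + 1) ≤ p.coeff i ^ 2)
    (hr_lc : ∀ i, 0 < i → i < r.natDegree →
      r.coeff (i - 1) * r.coeff (i + 1) ≤ r.coeff i ^ 2) :
    (∀ i ≤ (p * r).natDegree, 0 < (p * r).coeff i) ∧
    (∀ i, 0 < i → i < (p * r).natDegree →
      (p * r).coeff (i - 1) * (p * r).coeff (i + 1) ≤ (p * r).coeff i ^ 2) := by
  have hp0 : p ≠ 0 := fun h => by simpa [h] using hp_pos 0 (by simp [h])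
  have hr0 : r ≠ 0 := fun h => by simpa [h] using hr_pos 0 (by simp [h])
  have hdeg : (p * r).natDegree = p.natDegree + r.natDegree :=
    Polynomial.natDegree_mul hp0 hr0
  have hpnn : ∀ j, 0 ≤ p.coeff j := by
    intro j
    rcases le_or_gt j p.natDegree with h | h
    · exact (hp_pos j h).le
    · rw [Polynomial.coeff_eq_zero_of_natDegree_lt h]
  have hrnn : ∀ j, 0 ≤ r.coeff j := by
    intro j
    rcases le_or_gt j r.natDegree with h | h
    · exact (hr_pos j h).le
    · rw [Polynomial.coeff_eq_zero_of_natDegree_lt h]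
  -- the ℤ-indexed coefficient sequences
  set a : ℤ → ℝ := fun n => if 0 ≤ n then p.coeff n.toNat else 0 with ha_def
  set b : ℤ → ℝ := fun n => if 0 ≤ n then r.coeff n.toNat else 0 with hb_def
  have ha : ∀ j : ℕ, a j = p.coeff j := fun j => by simp [ha_def]
  have hb : ∀ j : ℕ, b j = r.coeff j := fun j => by simp [hb_def]
  have ha0 : ∀ n : ℤ, n < 0 → a n = 0 := fun n hn => by
    simp only [ha_def]; rw [if_neg (by omega)]
  have hb0 : ∀ n : ℤ, n < 0 → b n = 0 := fun n hn => by
    simp only [hb_def]; rw [if_neg (by omega)]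
  have hza : ∀ n : ℤ, n < 0 ∨ (p.natDegree : ℤ) < n → a n = 0 := by
    intro n h
    rcases h with h | h
    · exact ha0 n h
    · simp only [ha_def]; rw [if_pos (by omega)]
      exact Polynomial.coeff_eq_zero_of_natDegree_lt (by omega)
  have hzb : ∀ n : ℤ, n < 0 ∨ (r.natDegree : ℤ) < n → b n = 0 := by
    intro n h
    rcases h with h | h
    · exact hb0 n h
    · simp only [hb_def]; rw [if_pos (by omega)]
      exact Polynomial.coeff_eq_zero_of_natDegree_lt (by omega)
  have hpa : ∀ n : ℤ, 0 ≤ n → n ≤ (p.natDegree : ℤ) → 0 < a n := by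
    intro n h1 h2
    simp only [ha_def]; rw [if_pos h1]; exact hp_pos _ (by omega)
  have hpb : ∀ n : ℤ, 0 ≤ n → n ≤ (r.natDegree : ℤ) → 0 < b n := by
    intro n h1 h2
    simp only [hb_def]; rw [if_pos h1]; exact hr_pos _ (by omega)
  have hlca : ∀ n : ℤ, a (n - 1) * a (n + 1) ≤ a n ^ 2 := by
    intro n
    rcases le_or_gt n 0 with h | h
    · rw [ha0 _ (by omega), zero_mul]; positivity
    rcases le_or_gt (p.natDegree : ℤ) n with h2 | h2
    · rw [hza (n+1) (Or.inr (by omega)), mul_zero]; positivity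
    · have e1 : a (n - 1) = p.coeff (n.toNat - 1) := by
        simp only [ha_def]; rw [if_pos (by omega)]; congr 1; omega
      have e2 : a (n + 1) = p.coeff (n.toNat + 1) := by
        simp only [ha_def]; rw [if_pos (by omega)]; congr 1; omega
      have e3 : a n = p.coeff n.toNat := by simp only [ha_def]; rw [if_pos (by omega)]
      rw [e1, e2, e3]
      exact hp_lc n.toNat (by omega) (by omega)
  have hlcb : ∀ n : ℤ, b (n - 1) * b (n + 1) ≤ b n ^ 2 := by
    intro n
    rcases le_or_gt n 0 with h | h
    · rw [hb0 _ (by omega), zero_mul]; positivity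
    rcases le_or_gt (r.natDegree : ℤ) n with h2 | h2
    · rw [hzb (n+1) (Or.inr (by omega)), mul_zero]; positivity
    · have e1 : b (n - 1) = r.coeff (n.toNat - 1) := by
        simp only [hb_def]; rw [if_pos (by omega)]; congr 1; omega
      have e2 : b (n + 1) = r.coeff (n.toNat + 1) := by
        simp only [hb_def]; rw [if_pos (by omega)]; congr 1; omega
      have e3 : b n = r.coeff n.toNat := by simp only [hb_def]; rw [if_pos (by omega)]
      rw [e1, e2, e3]
      exact hr_lc n.toNat (by omega) (by omega)
  have keyA := key_tp2 a p.natDegree hpa hza hlca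
  have keyB := key_tp2 b r.natDegree hpb hzb hlcb
  constructor
  · -- positivity of the product's coefficients
    intro i hi
    rw [hdeg] at hi
    rw [Polynomial.coeff_mul]
    apply Finset.sum_pos'
    · intro x _
      exact mul_nonneg (hpnn _) (hrnn _)
    · refine ⟨(min i p.natDegree, i - min i p.natDegree), ?_, ?_⟩
      · rw [Finset.HasAntidiagonal.mem_antidiagonal]; omega
      · exact mul_pos (hp_pos _ (min_le_right _ _)) (hr_pos _ (by omega))
  · -- log-concavity
    intro i hipos hideg
    rw [hdeg] at hideg
    have c_k0 : (p * r).coeff i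
        = ∑ s ∈ Finset.Icc (0 : ℤ) ((i : ℤ) + 1), a s * b ((i : ℤ) - s) := by
      have h := conv_lemma p r a b ha ha0 hb hb0 i 0 ((i : ℤ) + 1) le_rfl (by omega)
      simpa using h
    have c_k1 : (p * r).coeff i
        = ∑ s ∈ Finset.Icc (0 : ℤ) ((i : ℤ) + 1), a (s - 1) * b ((i : ℤ) + 1 - s) := by
      have h := conv_lemma p r a b ha ha0 hb hb0 i 1 ((i : ℤ) + 1) (by norm_num) (by omega)
      simpa using h
    have c_p1 : (p * r).coeff (i + 1)
        = ∑ s ∈ Finset.Icc (0 : ℤ) ((i : ℤ) + 1), a s * b ((i : ℤ) + 1 - s) := by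
      have h := conv_lemma p r a b ha ha0 hb hb0 (i + 1) 0 ((i : ℤ) + 1) le_rfl (by omega)
      have e : ((i + 1 : ℕ) : ℤ) + 0 = (i : ℤ) + 1 := by push_cast; ring
      simpa [e] using h
    have c_m1 : (p * r).coeff (i - 1)
        = ∑ s ∈ Finset.Icc (0 : ℤ) ((i : ℤ) + 1), a (s - 1) * b ((i : ℤ) - s) := by
      have h := conv_lemma p r a b ha ha0 hb hb0 (i - 1) 1 ((i : ℤ) + 1) (by norm_num)
        (by omega)
      have e : ((i - 1 : ℕ) : ℤ) + 1 = (i : ℤ) := by omega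
      simpa [e] using h
    have hmt : ∀ s ∈ Finset.Icc (0 : ℤ) ((i : ℤ) + 1), ∀ t ∈ Finset.Icc (0 : ℤ) ((i : ℤ) + 1),
        0 ≤ (a s * a (t - 1) - a t * a (s - 1)) *
          (b ((i : ℤ) - s) * b ((i : ℤ) + 1 - t) - b ((i : ℤ) - t) * b ((i : ℤ) + 1 - s)) := by
      intro s _ t _
      have hB : ∀ u v : ℤ, u ≤ v →
          b ((i : ℤ) - v) * b ((i : ℤ) + 1 - u) ≤ b ((i : ℤ) + 1 - v) * b ((i : ℤ) - u) := by
        intro u v huv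
        have h2 := keyB ((i : ℤ) + 1 - v) ((i : ℤ) + 1 - u) (by omega)
        have e1 : (i : ℤ) + 1 - v - 1 = (i : ℤ) - v := by ring
        have e2 : (i : ℤ) + 1 - u - 1 = (i : ℤ) - u := by ring
        rw [e1, e2] at h2
        linarith
      rcases le_total s t with h | h
      · have h1 := keyA s t h
        have h2 := hB s t h
        have := mul_nonneg (by linarith : (0:ℝ) ≤ a s * a (t - 1) - a t * a (s - 1))
          (by linarith : (0:ℝ) ≤ b ((i : ℤ) - s) * b ((i : ℤ) + 1 - t)
            - b ((i : ℤ) - t) * b ((i : ℤ) + 1 - s))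
        linarith
      · have h1 := keyA t s h
        have h2 := hB t s h
        have := mul_nonneg (by linarith : (0:ℝ) ≤ a t * a (s - 1) - a s * a (t - 1))
          (by linarith : (0:ℝ) ≤ b ((i : ℤ) - t) * b ((i : ℤ) + 1 - s)
            - b ((i : ℤ) - s) * b ((i : ℤ) + 1 - t))
        nlinarith [this]
    have hb2 := binet2 (Finset.Icc (0 : ℤ) ((i : ℤ) + 1)) a (fun s => a (s - 1))
      (fun s => b ((i : ℤ) - s)) (fun s => b ((i : ℤ) + 1 - s)) hmt
    rw [sq, c_m1, c_p1]
    calc (∑ s ∈ Finset.Icc (0 : ℤ) ((i : ℤ) + 1), a (s - 1) * b ((i : ℤ) - s)) *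
          ∑ s ∈ Finset.Icc (0 : ℤ) ((i : ℤ) + 1), a s * b ((i : ℤ) + 1 - s)
        = (∑ s ∈ Finset.Icc (0 : ℤ) ((i : ℤ) + 1), a s * b ((i : ℤ) + 1 - s)) *
          ∑ s ∈ Finset.Icc (0 : ℤ) ((i : ℤ) + 1), a (s - 1) * b ((i : ℤ) - s) := mul_comm _ _
      _ ≤ (∑ s ∈ Finset.Icc (0 : ℤ) ((i : ℤ) + 1), a s * b ((i : ℤ) - s)) *
          ∑ s ∈ Finset.Icc (0 : ℤ) ((i : ℤ) + 1), a (s - 1) * b ((i : ℤ) + 1 - s) := hb2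
      _ = (p * r).coeff i * (p * r).coeff i := by rw [← c_k0, ← c_k1]
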